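/- Let K be a field and let S = ⟨n_1,n_2,n_3⟩ be a numerical semigroup minimally generated by n_1 < n_2 < n_3 with gcd(n_1,n_2,n_3)=1 which is not symmetric. Let φ : K[X,Y,Z] → K[t] be the K-algebra homomorphism with φ(X)=t^{n_1}, φ(Y)=t^{n_2}, φ(Z)=t^{n_3}, and let I_S = ker φ. Then there exist positive integers a,b,c,d,e,f such that I_S is generated by the three maximal minors of the matrix ((X^a, Y^b, Z^c),(Z^d, X^e, Y^f)), namely by X^{a+e} − Y^bZ^d, X^aY^f − Z^{c+d}, and Y^{b+f} − X^eZ^c. -/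

import Mathlib

/-- Membership of an integer in an additive submonoid of `ℕ`, viewed inside `ℤ`
via the inclusion `ℕ ⊆ ℤ`. -/
def AddSubmonoid.zmem (S : AddSubmonoid ℕ) (x : ℤ) : Prop :=
  ∃ n : ℕ, n ∈ S ∧ (n : ℤ) = x

/-- The Frobenius number `g(S) = max {x ∈ ℤ : x ∉ S}` of a numerical semigroup. -/
noncomputable def frobeniusNumber (S : AddSubmonoid ℕ) : ℤ :=
  sSup {x : ℤ | ¬ S.zmem x}

/-- The set of pseudo-Frobenius numbers
`T(S) = {x ∈ ℤ \ S : x + s ∈ S for all s ∈ S, s ≠ 0}`. -/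
def pseudoFrobeniusSet (S : AddSubmonoid ℕ) : Set ℤ :=
  {x : ℤ | ¬ S.zmem x ∧ ∀ s ∈ S, s ≠ 0 → S.zmem (x + s)}

namespace Stmt7Aux


def cl2 (y z : ℕ) : AddSubmonoid ℕ := AddSubmonoid.closure {y, z}

lemma mem_cl2 {y z p : ℕ} : p ∈ cl2 y z ↔ ∃ α β : ℕ, α * y + β * z = p := by
  rw [cl2, AddSubmonoid.mem_closure_pair]
  simp only [smul_eq_mul]

def IsMinMult (x : ℕ) (P : AddSubmonoid ℕ) (c : ℕ) : Prop :=
  0 < c ∧ c * x ∈ P ∧ ∀ k, 0 < k → k * x ∈ P → c ≤ k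

lemma memS_iff (S : AddSubmonoid ℕ) (x y z : ℕ)
    (hS : S = AddSubmonoid.closure {x, y, z}) (s : ℕ) :
    s ∈ S ↔ ∃ p q r : ℕ, p * x + q * y + r * z = s := by
  subst hS
  constructor
  · intro hs
    induction hs using AddSubmonoid.closure_induction with
    | mem t ht =>
      rcases ht with rfl | rfl | rfl
      · exact ⟨1, 0, 0, by ring⟩
      · exact ⟨0, 1, 0, by ring⟩
      · exact ⟨0, 0, 1, by ring⟩
    | zero => exact ⟨0, 0, 0, by ring⟩
    | add a b ha hb iha ihb =>
      obtain ⟨p, q, r, rfl⟩ := iha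
      obtain ⟨p', q', r', rfl⟩ := ihb
      exact ⟨p + p', q + q', r + r', by ring⟩
  · rintro ⟨p, q, r, rfl⟩
    have hx : x ∈ AddSubmonoid.closure ({x, y, z} : Set ℕ) :=
      AddSubmonoid.subset_closure (by simp)
    have hy : y ∈ AddSubmonoid.closure ({x, y, z} : Set ℕ) :=
      AddSubmonoid.subset_closure (by simp)
    have hz : z ∈ AddSubmonoid.closure ({x, y, z} : Set ℕ) :=
      AddSubmonoid.subset_closure (by simp)
    have h1 : p * x = p • x := by simp [smul_eq_mul]
    have h2 : q * y = q • y := by simp [smul_eq_mul]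
    have h3 : r * z = r • z := by simp [smul_eq_mul]
    rw [h1, h2, h3]
    exact add_mem (add_mem (nsmul_mem hx p) (nsmul_mem hy q)) (nsmul_mem hz r)

lemma lemSym (S : AddSubmonoid ℕ) (x y z u v w : ℕ) (hx : 0 < x) (hy : 0 < y) (hz : 0 < z)
    (hS : S = AddSubmonoid.closure {x, y, z})
    (hgcd : Nat.gcd x (Nat.gcd y z) = 1)
    (minu : IsMinMult x (cl2 y z) u) (minv : IsMinMult y (cl2 x z) v)
    (minw : IsMinMult z (cl2 x y) w)
    (huv : u * x = v * y) :
    ∀ t : ℤ, ¬ S.zmem t ↔ S.zmem (frobeniusNumber S - t) := by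
  obtain ⟨s1, s2, hw⟩ := mem_cl2.1 minw.2.1   -- s1*x + s2*y = w*z
  have huvZ : ((u : ℤ) * x) = v * y := by exact_mod_cast huv
  obtain ⟨V, hV⟩ : ∃ V, V + 1 = v := ⟨v - 1, by have := minv.1; omega⟩
  obtain ⟨W, hW⟩ : ∃ W, W + 1 = w := ⟨w - 1, by have := minw.1; omega⟩
  -- normalization of the y-exponent
  have reduce_q : ∀ q p r : ℕ, ∃ p' q', p * x + q * y + r * z = p' * x + q' * y + r * z ∧ q' < v := by
    intro q
    induction q using Nat.strong_induction_on with
    | _ q IH =>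
      intro p r
      by_cases hq : q < v
      · exact ⟨p, q, rfl, hq⟩
      · push_neg at hq
        obtain ⟨q₀, hq₀⟩ := Nat.le.dest hq  -- v + q₀ = q
        obtain ⟨p', q', heq, hlt⟩ := IH q₀ (by omega) (p + u) r
        refine ⟨p', q', ?_, hlt⟩
        rw [← heq, ← hq₀, add_mul, ← huv]
        ring
  -- full normalization
  have reduce : ∀ r p q : ℕ, ∃ p' q' r',
      p * x + q * y + r * z = p' * x + q' * y + r' * z ∧ q' < v ∧ r' < w := by
    intro r
    induction r using Nat.strong_induction_on with
    | _ r IH =>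
      intro p q
      by_cases hr : r < w
      · obtain ⟨p', q', heq, hlt⟩ := reduce_q q p r
        exact ⟨p', q', r, heq, hlt, hr⟩
      · push_neg at hr
        obtain ⟨r₀, hr₀⟩ := Nat.le.dest hr -- w + r₀ = r
        obtain ⟨p', q', r', heq, h1, h2⟩ := IH r₀ (by omega) (p + s1) (q + s2)
        refine ⟨p', q', r', ?_, h1, h2⟩
        rw [← heq, ← hr₀, add_mul w r₀ z, ← hw]
        ring
  have lemI_y : ∀ q, 0 < q → q < v → ∀ A B, q * y = A * x + B * z → False := by
    intro q h0 hlt A B heq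
    have := minv.2.2 q h0 (mem_cl2.2 ⟨A, B, heq.symm⟩)
    omega
  have lemI_z : ∀ r, 0 < r → r < w → ∀ A B, r * z = A * x + B * y → False := by
    intro r h0 hlt A B heq
    have := minw.2.2 r h0 (mem_cl2.2 ⟨A, B, heq.symm⟩)
    omega
  -- the key uniqueness lemma
  have Ap1 : ∀ α q r q' r' : ℕ, q < v → r < w → q' < v → r' < w → 0 < α →
      α * x + q' * y + r' * z = q * y + r * z → False := by
    intro α q r q' r' hq hr hq' hr' hα heq
    rcases le_or_gt q' q with hqq | hqq
    · rcases le_or_gt r' r with hrr | hrr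
      · -- both ≤ : α*x = dq*y + dr*z
        obtain ⟨dq, hdq⟩ := Nat.le.dest hqq; subst hdq
        obtain ⟨dr, hdr⟩ := Nat.le.dest hrr; subst hdr
        have key : α * x = dq * y + dr * z := by
          have heqZ : ((α : ℤ) * x + q' * y + r' * z) = (q' + dq) * y + (r' + dr) * z := by
            exact_mod_cast heq
          have : ((α : ℤ) * x) = dq * y + dr * z := by linear_combination heqZ
          exact_mod_cast this
        have hαu : u ≤ α := minu.2.2 α hα (mem_cl2.2 ⟨dq, dr, key.symm⟩)
        obtain ⟨dα, hdα⟩ := Nat.le.dest hαu; subst hdα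
        have key2 : dq * y + dr * z = dα * x + v * y := by
          have keyZ : (((u + dα : ℕ) : ℤ) * x) = dq * y + dr * z := by exact_mod_cast key
          have : ((dq : ℤ) * y + dr * z) = dα * x + v * y := by
            push_cast at keyZ
            linear_combination huvZ - keyZ
          exact_mod_cast this
        rcases Nat.eq_zero_or_pos dr with h0 | h0
        · subst h0
          simp only [zero_mul, add_zero] at key2
          have hlt2 : dq * y < v * y := by
            have : dq < v := by omega
            exact Nat.mul_lt_mul_of_lt_of_le this (le_refl y) hy
          have hge : v * y ≤ dq * y := key2 ▸ Nat.le_add_left (v * y) (dα * x)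
          exact absurd hlt2 (not_lt.2 hge)
        · obtain ⟨ev, hev⟩ := Nat.le.dest (le_of_lt (show dq < v by omega))
          have hev0 : 0 < ev := by omega
          have key3 : dr * z = dα * x + ev * y := by
            have k2 : ((dq : ℤ) * y + dr * z) = dα * x + v * y := by exact_mod_cast key2
            have hevZ : ((dq : ℤ) + ev) = v := by exact_mod_cast hev
            have : ((dr : ℤ) * z) = dα * x + ev * y := by linear_combination k2 - y * hevZ
            exact_mod_cast this
          exact lemI_z dr h0 (by omega) dα ev key3
      · -- q' ≤ q, r < r'
        obtain ⟨dq, hdq⟩ := Nat.le.dest hqq; subst hdq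
        obtain ⟨dr, hdr⟩ := Nat.le.dest (le_of_lt hrr); subst hdr
        have hdr0 : 0 < dr := by omega
        have key : dq * y = α * x + dr * z := by
          have heqZ : ((α : ℤ) * x + q' * y + (r + dr) * z) = (q' + dq) * y + r * z := by
            exact_mod_cast heq
          have : ((dq : ℤ) * y) = α * x + dr * z := by linear_combination - heqZ
          exact_mod_cast this
        have hdq0 : 0 < dq := by
          rcases Nat.eq_zero_or_pos dq with h0 | h0
          · exfalso
            subst h0
            simp only [zero_mul] at key
            rcases Nat.add_eq_zero.1 key.symm with ⟨h1, h2⟩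
            rcases Nat.mul_eq_zero.1 h1 with h' | h' <;> omega
          · exact h0
        exact lemI_y dq hdq0 (by omega) α dr key
    · rcases le_or_gt r' r with hrr | hrr
      · -- q < q', r' ≤ r
        obtain ⟨dq, hdq⟩ := Nat.le.dest (le_of_lt hqq); subst hdq
        obtain ⟨dr, hdr⟩ := Nat.le.dest hrr; subst hdr
        have hdq0 : 0 < dq := by omega
        have key : dr * z = α * x + dq * y := by
          have heqZ : ((α : ℤ) * x + (q + dq) * y + r' * z) = q * y + (r' + dr) * z := by
            exact_mod_cast heq
          have : ((dr : ℤ) * z) = α * x + dq * y := by linear_combination -heqZ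
          exact_mod_cast this
        have hdr0 : 0 < dr := by
          rcases Nat.eq_zero_or_pos dr with h0 | h0
          · exfalso
            subst h0
            simp only [zero_mul] at key
            rcases Nat.add_eq_zero.1 key.symm with ⟨h1, h2⟩
            rcases Nat.mul_eq_zero.1 h1 with h' | h' <;> omega
          · exact h0
        exact lemI_z dr hdr0 (by omega) α dq key
      · -- q < q', r < r' : impossible by size
        have c1 : q * y < q' * y := Nat.mul_lt_mul_of_lt_of_le hqq (le_refl y) hy
        have c2 : r * z < r' * z := Nat.mul_lt_mul_of_lt_of_le hrr (le_refl z) hz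
        have c3 : 0 < α * x := Nat.mul_pos hα hx
        linarith [heq]
  have memS := memS_iff S x y z hS
  have zmem_iff : ∀ t : ℤ, S.zmem t ↔ ∃ p q r : ℕ, ((p * x + q * y + r * z : ℕ) : ℤ) = t := by
    intro t
    constructor
    · rintro ⟨n, hn, hcast⟩
      obtain ⟨p, q, r, rfl⟩ := (memS n).1 hn
      exact ⟨p, q, r, hcast⟩
    · rintro ⟨p, q, r, h⟩
      exact ⟨_, (memS _).2 ⟨p, q, r, rfl⟩, h⟩
  -- every residue class mod x contains a small combination
  have allres : ∀ t : ℤ, ∃ q r : ℕ, q < v ∧ r < w ∧ (x:ℤ) ∣ t - ((q * y + r * z : ℕ) : ℤ) := by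
    intro t
    have hb := Nat.gcd_eq_gcd_ab x (Nat.gcd y z)
    rw [hgcd] at hb
    have hb2 := Nat.gcd_eq_gcd_ab y z
    set A : ℤ := Nat.gcdA x (Nat.gcd y z)
    set B : ℤ := Nat.gcdB x (Nat.gcd y z)
    set A' : ℤ := Nat.gcdA y z
    set B' : ℤ := Nat.gcdB y z
    have bez : (1 : ℤ) = x * A + y * (B * A') + z * (B * B') := by
      push_cast at hb hb2
      linear_combination hb + B * hb2
    have ht : t = x * (t * A) + y * (t * (B * A')) + z * (t * (B * B')) := by
      linear_combination t * bez
    have hxZ : (x : ℤ) ≠ 0 := by exact_mod_cast hx.ne'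
    set ty : ℤ := t * (B * A')
    set tz : ℤ := t * (B * B')
    set q0 : ℕ := (ty % x).toNat with hq0def
    set r0 : ℕ := (tz % x).toNat with hr0def
    have hq0 : (q0 : ℤ) = ty % x := Int.toNat_of_nonneg (Int.emod_nonneg ty hxZ)
    have hr0 : (r0 : ℤ) = tz % x := Int.toNat_of_nonneg (Int.emod_nonneg tz hxZ)
    have d1 : (x:ℤ) ∣ ty - q0 := by
      rw [hq0, Int.emod_def]
      exact ⟨ty / x, by ring⟩
    have d2 : (x:ℤ) ∣ tz - r0 := by
      rw [hr0, Int.emod_def]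
      exact ⟨tz / x, by ring⟩
    have hdvd0 : (x:ℤ) ∣ t - ((q0 * y + r0 * z : ℕ) : ℤ) := by
      have hid : t - ((q0 * y + r0 * z : ℕ) : ℤ)
          = x * (t * A) + (ty - q0) * y + (tz - r0) * z := by
        push_cast
        linear_combination ht
      rw [hid]
      exact dvd_add (dvd_add ⟨t * A, rfl⟩ (Dvd.dvd.mul_right d1 y)) (Dvd.dvd.mul_right d2 z)
    obtain ⟨p', q', r', heq, hq', hr'⟩ := reduce r0 0 q0
    refine ⟨q', r', hq', hr', ?_⟩
    have hid2 : t - ((q' * y + r' * z : ℕ) : ℤ)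
        = (t - ((q0 * y + r0 * z : ℕ) : ℤ)) + p' * x := by
      have heqZ : ((0 * x + q0 * y + r0 * z : ℕ) : ℤ) = ((p' * x + q' * y + r' * z : ℕ) : ℤ) := by
        exact_mod_cast heq
      push_cast at heqZ ⊢
      linear_combination heqZ
    rw [hid2]
    exact dvd_add hdvd0 ⟨p', by ring⟩
  -- the max of the Apéry box
  set M : ℕ := V * y + W * z with hM
  -- M ≥ x - 1 via counting residues
  have hMx : x ≤ M + 1 := by
    haveI : NeZero x := ⟨hx.ne'⟩
    choose qf rf hqf hrf hdf using fun i : ZMod x => allres (i.val : ℤ)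
    have hFle : ∀ i : ZMod x, qf i * y + rf i * z ≤ M := by
      intro i
      have h1 : qf i ≤ V := by have := hqf i; omega
      have h2 : rf i ≤ W := by have := hrf i; omega
      exact add_le_add (Nat.mul_le_mul h1 (le_refl y)) (Nat.mul_le_mul h2 (le_refl z))
    have hinj : Function.Injective fun i : ZMod x => qf i * y + rf i * z := by
      intro i j hij
      have hij' : qf i * y + rf i * z = qf j * y + rf j * z := hij
      have d1 := hdf i
      have d2 := hdf j
      rw [hij'] at d1
      have d3 : (x:ℤ) ∣ (i.val : ℤ) - (j.val : ℤ) := by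
        have := dvd_sub d1 d2
        simpa using this
      obtain ⟨k, hk⟩ := d3
      have hi := ZMod.val_lt i
      have hj := ZMod.val_lt j
      have hvv : i.val = j.val := by
        rcases lt_trichotomy k 0 with hk0 | hk0 | hk0
        · exfalso
          have : (x:ℤ) * k ≤ x * (-1) := by
            apply mul_le_mul_of_nonneg_left (by omega) (by exact_mod_cast hx.le)
          have h1 : ((i.val : ℤ)) - j.val ≤ -x := by rw [hk]; linarith
          have h2 : (0:ℤ) ≤ (i.val : ℤ) := by positivity
          have h3 : ((j.val : ℤ)) < x := by exact_mod_cast hj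
          linarith
        · subst hk0
          simp only [mul_zero] at hk
          have : (i.val : ℤ) = j.val := by linarith
          exact_mod_cast this
        · exfalso
          have : (x:ℤ) * 1 ≤ x * k := by
            apply mul_le_mul_of_nonneg_left (by omega) (by exact_mod_cast hx.le)
          have h1 : (x:ℤ) ≤ (i.val : ℤ) - j.val := by rw [hk]; linarith
          have h2 : (0:ℤ) ≤ (j.val : ℤ) := by positivity
          have h3 : ((i.val : ℤ)) < x := by exact_mod_cast hi
          linarith
      exact ZMod.val_injective x hvv
    have hcard : Fintype.card (ZMod x) ≤ (Finset.range (M + 1)).card := by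
      apply Finset.card_le_card_of_injOn (fun i => qf i * y + rf i * z)
      · intro i _
        simp only [Finset.mem_coe, Finset.mem_range]
        exact Nat.lt_succ_of_le (hFle i)
      · intro i _ j _ hij
        exact hinj hij
    rwa [ZMod.card, Finset.card_range] at hcard
  -- helper: if t is ≡ small box elt and ≥ it, then t ∈ S
  have zmem_of_ge : ∀ (t : ℤ) (q r : ℕ), (x:ℤ) ∣ t - ((q * y + r * z : ℕ) : ℤ) →
      (0:ℤ) ≤ t - ((q * y + r * z : ℕ) : ℤ) → S.zmem t := by
    intro t q r hdvd hge
    obtain ⟨k, hk⟩ := hdvd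
    have hk0 : 0 ≤ k := by
      rcases le_or_gt 0 k with h | h
      · exact h
      · exfalso
        have : (x:ℤ) * k < 0 := by
          apply mul_neg_of_pos_of_neg (by exact_mod_cast hx) h
        linarith
    refine (zmem_iff t).2 ⟨k.toNat, q, r, ?_⟩
    have htn : ((k.toNat : ℤ)) = k := Int.toNat_of_nonneg hk0
    push_cast
    push_cast at hk
    rw [htn]
    linarith [hk]
  have hgaps : IsGreatest {t : ℤ | ¬ S.zmem t} ((M:ℤ) - x) := by
    constructor
    · -- M - x is a gap
      rintro ⟨s, hsS, hcast⟩
      obtain ⟨p, q, r, hpqr⟩ := (memS s).1 hsS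
      obtain ⟨p', q', r', heq, hq', hr'⟩ := reduce r p q
      have key : (p' + 1) * x + q' * y + r' * z = V * y + W * z := by
        have h1 : ((p * x + q * y + r * z : ℕ) : ℤ) = ((s : ℕ) : ℤ) := by exact_mod_cast hpqr
        have h2 : ((p * x + q * y + r * z : ℕ) : ℤ) = ((p' * x + q' * y + r' * z : ℕ) : ℤ) := by
          exact_mod_cast heq
        have : (((p' + 1) * x + q' * y + r' * z : ℕ) : ℤ) = ((V * y + W * z : ℕ) : ℤ) := by
          push_cast at h1 h2 ⊢
          have hMZ : ((M : ℕ) : ℤ) = (V : ℤ) * y + W * z := by push_cast [hM]; ring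
          linarith [hcast, hMZ]
        exact_mod_cast this
      exact Ap1 (p' + 1) V W q' r' (by omega) (by omega) hq' hr' (by omega) key
    · -- upper bound
      intro t ht
      by_contra hgt
      push_neg at hgt  -- M - x < t
      apply ht
      obtain ⟨q, r, hq, hr, hdvd⟩ := allres t
      have hbM : q * y + r * z ≤ M := by
        have h1 : q ≤ V := by omega
        have h2 : r ≤ W := by omega
        exact add_le_add (Nat.mul_le_mul h1 (le_refl y)) (Nat.mul_le_mul h2 (le_refl z))
      apply zmem_of_ge t q r hdvd
      -- 0 ≤ t - b since t - b > -x and x ∣ t - b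
      obtain ⟨k, hk⟩ := hdvd
      have h1 : -(x:ℤ) < t - ((q * y + r * z : ℕ) : ℤ) := by
        have hbZ : (((q * y + r * z : ℕ)) : ℤ) ≤ (M : ℤ) := by exact_mod_cast hbM
        linarith
      have hk0 : 0 ≤ k := by
        rcases le_or_gt 0 k with h | h
        · exact h
        · exfalso
          have : (x:ℤ) * k ≤ x * (-1) := by
            apply mul_le_mul_of_nonneg_left (by omega) (by exact_mod_cast hx.le)
          rw [hk] at h1
          linarith
      rw [hk]
      positivity
  have hfrob : frobeniusNumber S = (M:ℤ) - x := by
    have : frobeniusNumber S = sSup {t : ℤ | ¬ S.zmem t} := rfl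
    rw [this, hgaps.csSup_eq]
  intro t
  rw [hfrob]
  constructor
  · intro ht
    obtain ⟨q, r, hq, hr, hdvd⟩ := allres t
    -- t < box element, in fact t ≤ b - x
    have hneg : t - ((q * y + r * z : ℕ) : ℤ) < 0 := by
      by_contra hge
      push_neg at hge
      exact ht (zmem_of_ge t q r hdvd hge)
    obtain ⟨k, hk⟩ := hdvd
    have hkneg : k ≤ -1 := by
      rcases le_or_gt 0 k with h | h
      · exfalso
        have : (0:ℤ) ≤ x * k := by positivity
        linarith [hk ▸ this]
      · omega
    obtain ⟨dq, hdq⟩ := Nat.le.dest (show q ≤ V by omega)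
    obtain ⟨dr, hdr⟩ := Nat.le.dest (show r ≤ W by omega)
    refine (zmem_iff _).2 ⟨(-k-1).toNat, dq, dr, ?_⟩
    have htn : ((-k-1).toNat : ℤ) = -k-1 := Int.toNat_of_nonneg (by omega)
    push_cast
    rw [htn]
    have hdqZ : (q:ℤ) + dq = V := by exact_mod_cast hdq
    have hdrZ : (r:ℤ) + dr = W := by exact_mod_cast hdr
    have hMZ : ((M : ℕ) : ℤ) = (V : ℤ) * y + W * z := by push_cast [hM]; ring
    push_cast at hk
    linear_combination hk + y * hdqZ + z * hdrZ - hMZ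
  · intro ht htmem
    obtain ⟨s, hs, hc⟩ := ht
    obtain ⟨s', hs', hc'⟩ := htmem
    have : S.zmem ((M:ℤ) - x) := ⟨s + s', add_mem hs hs', by push_cast; linarith⟩
    exact hgaps.1 this

lemma cl2_comm (y z : ℕ) : cl2 y z = cl2 z y := by
  rw [cl2, cl2, Set.pair_comm]


lemma exists_minMult (x y z : ℕ) (hy : 0 < y) : ∃ c, IsMinMult x (cl2 y z) c := by
  classical
  have hex : ∃ k, 0 < k ∧ k * x ∈ cl2 y z := ⟨y, hy, mem_cl2.2 ⟨x, 0, by ring⟩⟩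
  refine ⟨Nat.find hex, (Nat.find_spec hex).1, (Nat.find_spec hex).2, ?_⟩
  intro k hk hmem
  exact Nat.find_min' hex ⟨hk, hmem⟩

lemma bound_lem (x y z cx cy Q R A B : ℕ) (hx : 0 < x) (hz : 0 < z)
    (hA : 0 < A) (hB : 0 < B)
    (minx : IsMinMult x (cl2 y z) cx)
    (rel1 : cx * x = Q * y + R * z) (rel2 : cy * y = A * x + B * z) :
    Q < cy := by
  by_contra hle
  push_neg at hle   -- cy ≤ Q
  have hAcx : A < cx := by
    have h1 : A * x < cy * y := by nlinarith
    have h2 : cy * y ≤ Q * y := Nat.mul_le_mul hle (le_refl y)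
    have h3 : A * x < cx * x := by nlinarith
    exact Nat.lt_of_mul_lt_mul_right h3
  obtain ⟨D, hD⟩ := Nat.le.dest (le_of_lt hAcx) -- A + D = cx
  obtain ⟨E, hE⟩ := Nat.le.dest hle -- cy + E = Q
  have hD0 : 0 < D := by omega
  subst hD; subst hE
  have key : D * x = E * y + (R + B) * z := by
    have h1 : ((A + D) * x : ℤ) = (cy + E) * y + R * z := by exact_mod_cast rel1
    have h2 : ((cy : ℤ) * y) = A * x + B * z := by exact_mod_cast rel2
    have : (D * x : ℤ) = E * y + (R + B) * z := by linear_combination h1 + h2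
    exact_mod_cast this
  have hmem : D * x ∈ cl2 y z := mem_cl2.2 ⟨E, R + B, key.symm⟩
  have := minx.2.2 D hD0 hmem
  omega

lemma LemD0 (x y z cx cy cz m : ℕ) (hx : 0 < x) (hy : 0 < y) (hz : 0 < z)
    (minx : IsMinMult x (cl2 y z) cx) (miny : IsMinMult y (cl2 x z) cy)
    (minz : IsMinMult z (cl2 x y) cz)
    (h : cx * x = m * y) :
    (cx * x = cy * y) ∨ ∃ β, cy * y = β * z ∧ cz ≤ β := by
  have hcx0 := minx.1
  have hm : 0 < m := by
    rcases Nat.eq_zero_or_pos m with h0 | h0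
    · subst h0
      simp only [zero_mul] at h
      rcases Nat.mul_eq_zero.1 h with h' | h' <;> omega
    · exact h0
  have hmcy : cy ≤ m := miny.2.2 m hm (mem_cl2.2 ⟨cx, 0, by simpa using h⟩)
  obtain ⟨α, β, hαβ⟩ := mem_cl2.1 miny.2.1  -- α*x + β*z = cy*y
  have hαcx : α ≤ cx := by
    have h1 : α * x ≤ cy * y := by rw [← hαβ]; exact Nat.le_add_right _ _
    have h2 : cy * y ≤ m * y := Nat.mul_le_mul hmcy (le_refl y)
    have h3 : α * x ≤ cx * x := by omega
    exact Nat.le_of_mul_le_mul_right h3 hx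
  rcases eq_or_lt_of_le hαcx with heq | hlt
  · -- α = cx
    have h4 : cy * y = m * y + β * z := by rw [← hαβ, heq, h]
    have h5 : m ≤ cy := by
      have h5' : m * y ≤ cy * y := by rw [h4]; exact Nat.le_add_right _ _
      exact Nat.le_of_mul_le_mul_right h5' hy
    have h6 : m = cy := le_antisymm h5 hmcy
    have h4' := h4
    rw [h6] at h4'
    have h7 : β * z = 0 := by linarith
    have h8 : β = 0 := by
      rcases Nat.mul_eq_zero.1 h7 with h' | h' <;> omega
    subst h8
    simp only [zero_mul, add_zero] at hαβ
    left
    rw [heq] at hαβ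
    exact hαβ
  · rcases Nat.eq_zero_or_pos α with h0 | h0
    · subst h0
      right
      have hcyy : cy * y = β * z := by omega
      have hβ : 0 < β := by
        rcases Nat.eq_zero_or_pos β with h' | h'
        · exfalso; subst h'; simp at hcyy; nlinarith [miny.1, hy]
        · exact h'
      exact ⟨β, hcyy, minz.2.2 β hβ (mem_cl2.2 ⟨0, cy, by simpa using hcyy⟩)⟩
    · exfalso
      obtain ⟨D, hD⟩ := Nat.le.dest (le_of_lt hlt) -- α + D = cx
      obtain ⟨E, hE⟩ := Nat.le.dest hmcy -- cy + E = m
      have hD0 : 0 < D := by omega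
      subst hD; subst hE
      have key : D * x = E * y + β * z := by
        have h1 : ((α + D) * x : ℤ) = (cy + E) * y := by exact_mod_cast h
        have h2 : ((α : ℤ) * x + β * z) = cy * y := by exact_mod_cast hαβ
        have : (D * x : ℤ) = E * y + β * z := by linear_combination h1 - h2
        exact_mod_cast this
      have := minx.2.2 D hD0 (mem_cl2.2 ⟨E, β, key.symm⟩)
      omega


lemma gcd3_perm (a b c : ℕ) : Nat.gcd a (Nat.gcd b c) = Nat.gcd b (Nat.gcd a c) := by
  rw [← Nat.gcd_assoc, Nat.gcd_comm a b, Nat.gcd_assoc]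

lemma gcd3_swap (a b c : ℕ) : Nat.gcd a (Nat.gcd b c) = Nat.gcd a (Nat.gcd c b) := by
  rw [Nat.gcd_comm b c]

lemma degenerate (S : AddSubmonoid ℕ)
    (x y z cx cy cz m : ℕ) (hx : 0 < x) (hy : 0 < y) (hz : 0 < z)
    (hS : S = AddSubmonoid.closure {x, y, z})
    (hgcd : Nat.gcd x (Nat.gcd y z) = 1)
    (minx : IsMinMult x (cl2 y z) cx) (miny : IsMinMult y (cl2 x z) cy)
    (minz : IsMinMult z (cl2 x y) cz)
    (h : cx * x = m * y)
    (hnotsym : ¬ ∀ t : ℤ, ¬ S.zmem t ↔ S.zmem (frobeniusNumber S - t)) : False := by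
  have hSyzx : S = AddSubmonoid.closure {y, z, x} := by
    rw [hS]; congr 1; ext t; simp; tauto
  have hSzxy : S = AddSubmonoid.closure {z, x, y} := by
    rw [hS]; congr 1; ext t; simp; tauto
  have hgcd_yzx : Nat.gcd y (Nat.gcd z x) = 1 := by
    rw [gcd3_swap, gcd3_perm]; exact hgcd
  have hgcd_zxy : Nat.gcd z (Nat.gcd x y) = 1 := by
    rw [gcd3_perm, gcd3_swap]; exact hgcd
  have minx' : IsMinMult x (cl2 z y) cx := by rwa [cl2_comm] at minx
  have miny' : IsMinMult y (cl2 z x) cy := by rwa [cl2_comm] at miny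
  have minz' : IsMinMult z (cl2 y x) cz := by rwa [cl2_comm] at minz
  rcases LemD0 x y z cx cy cz m hx hy hz minx miny minz h with hp | ⟨β, hβ, hβge⟩
  · exact hnotsym (lemSym S x y z cx cy cz hx hy hz hS hgcd minx miny minz hp)
  · rcases LemD0 y z x cy cz cx β hy hz hx miny' minz' minx hβ with hp | ⟨γ, hγ, hγge⟩
    · exact hnotsym (lemSym S y z x cy cz cx hy hz hx hSyzx hgcd_yzx miny' minz' minx hp)
    · rcases LemD0 z x y cz cx cy γ hz hx hy minz minx' miny' hγ with hp | ⟨δ, hδ, hδge⟩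
      · exact hnotsym (lemSym S z x y cz cx cy hz hx hy hSzxy hgcd_zxy minz minx' miny' hp)
      · have e1 : cy * y ≤ cx * x := by rw [hδ]; exact Nat.mul_le_mul hδge (le_refl y)
        have e2 : cz * z ≤ cy * y := by rw [hβ]; exact Nat.mul_le_mul hβge (le_refl z)
        have e3 : cx * x ≤ cz * z := by rw [hγ]; exact Nat.mul_le_mul hγge (le_refl x)
        have heq : cx * x = cy * y := le_antisymm (le_trans e3 e2) e1
        exact hnotsym (lemSym S x y z cx cy cz hx hy hz hS hgcd minx miny minz heq)

lemma herzog_numeric (n₁ n₂ n₃ : ℕ) (h1 : 0 < n₁) (h2 : 0 < n₂) (h3 : 0 < n₃)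
    (hgcd : Nat.gcd n₁ (Nat.gcd n₂ n₃) = 1)
    (S : AddSubmonoid ℕ) (hS : S = AddSubmonoid.closure {n₁, n₂, n₃})
    (hnotsym : ¬ ∀ t : ℤ, ¬ S.zmem t ↔ S.zmem (frobeniusNumber S - t)) :
    ∃ a b c d e f : ℕ, 0 < a ∧ 0 < b ∧ 0 < c ∧ 0 < d ∧ 0 < e ∧ 0 < f ∧
      (a + e) * n₁ = b * n₂ + d * n₃ ∧
      a * n₁ + f * n₂ = (c + d) * n₃ ∧
      (b + f) * n₂ = e * n₁ + c * n₃ ∧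
      (∀ k α β : ℕ, 0 < k → k * n₁ = α * n₂ + β * n₃ → a + e ≤ k) ∧
      (∀ k α β : ℕ, 0 < k → k * n₂ = α * n₁ + β * n₃ → b + f ≤ k) ∧
      (∀ k α β : ℕ, 0 < k → k * n₃ = α * n₁ + β * n₂ → c + d ≤ k) := by
  obtain ⟨c1, minc1⟩ := exists_minMult n₁ n₂ n₃ h2
  obtain ⟨c2, minc2⟩ := exists_minMult n₂ n₁ n₃ h1
  obtain ⟨c3, minc3⟩ := exists_minMult n₃ n₁ n₂ h1
  obtain ⟨r12, r13, hc1⟩ := mem_cl2.1 minc1.2.1  -- r12*n₂ + r13*n₃ = c1*n₁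
  obtain ⟨r21, r23, hc2⟩ := mem_cl2.1 minc2.2.1  -- r21*n₁ + r23*n₃ = c2*n₂
  obtain ⟨r31, r32, hc3⟩ := mem_cl2.1 minc3.2.1  -- r31*n₁ + r32*n₂ = c3*n₃
  have minc1' : IsMinMult n₁ (cl2 n₃ n₂) c1 := by rwa [cl2_comm] at minc1
  have minc2' : IsMinMult n₂ (cl2 n₃ n₁) c2 := by rwa [cl2_comm] at minc2
  have minc3' : IsMinMult n₃ (cl2 n₂ n₁) c3 := by rwa [cl2_comm] at minc3
  -- set and gcd permutations
  have hS132 : S = AddSubmonoid.closure {n₁, n₃, n₂} := by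
    rw [hS]; congr 1; ext t; simp; tauto
  have hS213 : S = AddSubmonoid.closure {n₂, n₁, n₃} := by
    rw [hS]; congr 1; ext t; simp; tauto
  have hS231 : S = AddSubmonoid.closure {n₂, n₃, n₁} := by
    rw [hS]; congr 1; ext t; simp; tauto
  have hS312 : S = AddSubmonoid.closure {n₃, n₁, n₂} := by
    rw [hS]; congr 1; ext t; simp; tauto
  have hS321 : S = AddSubmonoid.closure {n₃, n₂, n₁} := by
    rw [hS]; congr 1; ext t; simp; tauto
  have hg132 : Nat.gcd n₁ (Nat.gcd n₃ n₂) = 1 := by rw [gcd3_swap]; exact hgcd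
  have hg213 : Nat.gcd n₂ (Nat.gcd n₁ n₃) = 1 := by rw [gcd3_perm] at hgcd; exact hgcd
  have hg231 : Nat.gcd n₂ (Nat.gcd n₃ n₁) = 1 := by rw [gcd3_swap]; exact hg213
  have hg312 : Nat.gcd n₃ (Nat.gcd n₁ n₂) = 1 := by
    have h' := hg231
    rw [gcd3_perm, gcd3_swap] at h'
    exact h'
  have hg321 : Nat.gcd n₃ (Nat.gcd n₂ n₁) = 1 := by rw [gcd3_swap]; exact hg312
  -- positivity of all six coefficients
  have hr12 : 0 < r12 := by
    rcases Nat.eq_zero_or_pos r12 with h0 | h0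
    · exfalso
      subst h0
      simp only [zero_mul, zero_add] at hc1  -- r13*n₃ = c1*n₁
      exact degenerate S n₁ n₃ n₂ c1 c3 c2 r13 h1 h3 h2 hS132 hg132 minc1' minc3 minc2
        hc1.symm hnotsym
    · exact h0
  have hr13 : 0 < r13 := by
    rcases Nat.eq_zero_or_pos r13 with h0 | h0
    · exfalso
      subst h0
      simp only [zero_mul, add_zero] at hc1  -- r12*n₂ = c1*n₁
      exact degenerate S n₁ n₂ n₃ c1 c2 c3 r12 h1 h2 h3 hS hgcd minc1 minc2 minc3
        hc1.symm hnotsym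
    · exact h0
  have hr21 : 0 < r21 := by
    rcases Nat.eq_zero_or_pos r21 with h0 | h0
    · exfalso
      subst h0
      simp only [zero_mul, zero_add] at hc2  -- r23*n₃ = c2*n₂
      exact degenerate S n₂ n₃ n₁ c2 c3 c1 r23 h2 h3 h1 hS231 hg231 minc2' minc3' minc1
        hc2.symm hnotsym
    · exact h0
  have hr23 : 0 < r23 := by
    rcases Nat.eq_zero_or_pos r23 with h0 | h0
    · exfalso
      subst h0
      simp only [zero_mul, add_zero] at hc2  -- r21*n₁ = c2*n₂
      exact degenerate S n₂ n₁ n₃ c2 c1 c3 r21 h2 h1 h3 hS213 hg213 minc2 minc1 minc3'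
        hc2.symm hnotsym
    · exact h0
  have hr31 : 0 < r31 := by
    rcases Nat.eq_zero_or_pos r31 with h0 | h0
    · exfalso
      subst h0
      simp only [zero_mul, zero_add] at hc3  -- r32*n₂ = c3*n₃
      exact degenerate S n₃ n₂ n₁ c3 c2 c1 r32 h3 h2 h1 hS321 hg321 minc3' minc2' minc1'
        hc3.symm hnotsym
    · exact h0
  have hr32 : 0 < r32 := by
    rcases Nat.eq_zero_or_pos r32 with h0 | h0
    · exfalso
      subst h0
      simp only [zero_mul, add_zero] at hc3  -- r31*n₁ = c3*n₃
      exact degenerate S n₃ n₁ n₂ c3 c1 c2 r31 h3 h1 h2 hS312 hg312 minc3 minc1' minc2'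
        hc3.symm hnotsym
    · exact h0
  -- bounds r_{ij} < c_j
  have hb12 : r12 < c2 := bound_lem n₁ n₂ n₃ c1 c2 r12 r13 r21 r23 h1 h3 hr21 hr23
    minc1 hc1.symm hc2.symm
  have hb13 : r13 < c3 := bound_lem n₁ n₃ n₂ c1 c3 r13 r12 r31 r32 h1 h2 hr31 hr32
    minc1' (by rw [← hc1]; ring) hc3.symm
  have hb21 : r21 < c1 := bound_lem n₂ n₁ n₃ c2 c1 r21 r23 r12 r13 h2 h3 hr12 hr13
    minc2 hc2.symm hc1.symm
  have hb23 : r23 < c3 := bound_lem n₂ n₃ n₁ c2 c3 r23 r21 r32 r31 h2 h1 hr32 hr31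
    minc2' (by rw [← hc2]; ring) (by rw [← hc3]; ring)
  have hb31 : r31 < c1 := bound_lem n₃ n₁ n₂ c3 c1 r31 r32 r13 r12 h3 h2 hr13 hr12
    minc3 hc3.symm (by rw [← hc1]; ring)
  have hb32 : r32 < c2 := bound_lem n₃ n₂ n₁ c3 c2 r32 r31 r23 r21 h3 h1 hr23 hr21
    minc3' (by rw [← hc3]; ring) (by rw [← hc2]; ring)
  -- casted relations
  have hc1Z : ((r12 : ℤ) * n₂ + r13 * n₃) = c1 * n₁ := by exact_mod_cast hc1
  have hc2Z : ((r21 : ℤ) * n₁ + r23 * n₃) = c2 * n₂ := by exact_mod_cast hc2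
  have hc3Z : ((r31 : ℤ) * n₁ + r32 * n₂) = c3 * n₃ := by exact_mod_cast hc3
  -- column sums ≥
  obtain ⟨g2, hg2⟩ := Nat.le.dest (le_of_lt hb32) -- r32 + g2 = c2
  obtain ⟨g3, hg3⟩ := Nat.le.dest (le_of_lt hb23) -- r23 + g3 = c3
  have col1eq : (r21 + r31) * n₁ = g2 * n₂ + g3 * n₃ := by
    have hg2Z : ((r32 : ℤ) + g2) = c2 := by exact_mod_cast hg2
    have hg3Z : ((r23 : ℤ) + g3) = c3 := by exact_mod_cast hg3
    have : (((r21 : ℤ) + r31) * n₁) = g2 * n₂ + g3 * n₃ := by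
      linear_combination hc2Z + hc3Z - n₂ * hg2Z - n₃ * hg3Z
    exact_mod_cast this
  have col1 : c1 ≤ r21 + r31 :=
    minc1.2.2 _ (by omega) (mem_cl2.2 ⟨g2, g3, col1eq.symm⟩)
  obtain ⟨g1, hg1⟩ := Nat.le.dest (le_of_lt hb31) -- r31 + g1 = c1
  obtain ⟨g3', hg3'⟩ := Nat.le.dest (le_of_lt hb13) -- r13 + g3' = c3
  have col2eq : (r12 + r32) * n₂ = g1 * n₁ + g3' * n₃ := by
    have hg1Z : ((r31 : ℤ) + g1) = c1 := by exact_mod_cast hg1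
    have hg3Z : ((r13 : ℤ) + g3') = c3 := by exact_mod_cast hg3'
    have : (((r12 : ℤ) + r32) * n₂) = g1 * n₁ + g3' * n₃ := by
      linear_combination hc1Z + hc3Z - n₁ * hg1Z - n₃ * hg3Z
    exact_mod_cast this
  have col2 : c2 ≤ r12 + r32 :=
    minc2.2.2 _ (by omega) (mem_cl2.2 ⟨g1, g3', col2eq.symm⟩)
  obtain ⟨g1', hg1'⟩ := Nat.le.dest (le_of_lt hb21) -- r21 + g1' = c1
  obtain ⟨g2', hg2'⟩ := Nat.le.dest (le_of_lt hb12) -- r12 + g2' = c2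
  have col3eq : (r13 + r23) * n₃ = g1' * n₁ + g2' * n₂ := by
    have hg1Z : ((r21 : ℤ) + g1') = c1 := by exact_mod_cast hg1'
    have hg2Z : ((r12 : ℤ) + g2') = c2 := by exact_mod_cast hg2'
    have : (((r13 : ℤ) + r23) * n₃) = g1' * n₁ + g2' * n₂ := by
      linear_combination hc1Z + hc2Z - n₁ * hg1Z - n₂ * hg2Z
    exact_mod_cast this
  have col3 : c3 ≤ r13 + r23 :=
    minc3.2.2 _ (by omega) (mem_cl2.2 ⟨g1', g2', col3eq.symm⟩)
  -- total sum forces equalities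
  have i1 : c1 * n₁ ≤ (r21 + r31) * n₁ := Nat.mul_le_mul col1 (le_refl n₁)
  have i2 : c2 * n₂ ≤ (r12 + r32) * n₂ := Nat.mul_le_mul col2 (le_refl n₂)
  have i3 : c3 * n₃ ≤ (r13 + r23) * n₃ := Nat.mul_le_mul col3 (le_refl n₃)
  have total : c1 * n₁ + c2 * n₂ + c3 * n₃
      = (r21 + r31) * n₁ + (r12 + r32) * n₂ + (r13 + r23) * n₃ := by
    have : ((c1 : ℤ) * n₁ + c2 * n₂ + c3 * n₃)
        = ((r21 : ℤ) + r31) * n₁ + ((r12 : ℤ) + r32) * n₂ + ((r13 : ℤ) + r23) * n₃ := by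
      linear_combination - hc1Z - hc2Z - hc3Z
    exact_mod_cast this
  have e1 : c1 * n₁ = (r21 + r31) * n₁ := by omega
  have e2 : c2 * n₂ = (r12 + r32) * n₂ := by omega
  have e3 : c3 * n₃ = (r13 + r23) * n₃ := by omega
  have q1 : c1 = r21 + r31 := Nat.eq_of_mul_eq_mul_right h1 e1
  have q2 : c2 = r12 + r32 := Nat.eq_of_mul_eq_mul_right h2 e2
  have q3 : c3 = r13 + r23 := Nat.eq_of_mul_eq_mul_right h3 e3
  refine ⟨r31, r12, r23, r13, r21, r32, hr31, hr12, hr23, hr13, hr21, hr32, ?_, ?_, ?_, ?_, ?_, ?_⟩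
  · -- (r31 + r21) * n₁ = r12*n₂ + r13*n₃
    have : r31 + r21 = c1 := by omega
    rw [this]; exact hc1.symm
  · -- r31*n₁ + r32*n₂ = (r23 + r13)*n₃
    have : r23 + r13 = c3 := by omega
    rw [this]; exact hc3
  · -- (r12 + r32)*n₂ = r21*n₁ + r23*n₃
    have : r12 + r32 = c2 := by omega
    rw [this]; exact hc2.symm
  · intro k α β hk hkeq
    have : c1 ≤ k := minc1.2.2 k hk (mem_cl2.2 ⟨α, β, hkeq.symm⟩)
    omega
  · intro k α β hk hkeq
    have : c2 ≤ k := minc2.2.2 k hk (mem_cl2.2 ⟨α, β, hkeq.symm⟩)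
    omega
  · intro k α β hk hkeq
    have : c3 ≤ k := minc3.2.2 k hk (mem_cl2.2 ⟨α, β, hkeq.symm⟩)
    omega



open MvPolynomial

noncomputable def Mm (K : Type*) [Field K] (p q r : ℕ) : MvPolynomial (Fin 3) K :=
  X 0 ^ p * X 1 ^ q * X 2 ^ r

lemma monomial_eq_Mm (K : Type*) [Field K] (m : Fin 3 →₀ ℕ) (cK : K) :
    (monomial m cK : MvPolynomial (Fin 3) K) = C cK * Mm K (m 0) (m 1) (m 2) := by
  rw [monomial_eq, Mm]
  congr 1
  rw [Finsupp.prod_fintype]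
  · rw [Fin.prod_univ_three]
  · intro i; exact pow_zero _

lemma aeval_Mm (K : Type*) [Field K] (n₁ n₂ n₃ p q r : ℕ) :
    aeval ![(Polynomial.X : Polynomial K) ^ n₁, Polynomial.X ^ n₂, Polynomial.X ^ n₃]
      (Mm K p q r) = Polynomial.X ^ (p * n₁ + q * n₂ + r * n₃) := by
  rw [Mm]
  simp only [map_mul, map_pow, aeval_X, Matrix.cons_val_zero, Matrix.cons_val_one,
    Matrix.head_cons, Matrix.cons_val_two, Matrix.tail_cons]
  rw [← pow_mul, ← pow_mul, ← pow_mul, ← pow_add, ← pow_add]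
  congr 1
  ring

lemma nat3_le1 (A B C v : ℕ) (h : A + B + C = v) : A ≤ v := by omega
lemma nat3_le2 (A B C v : ℕ) (h : A + B + C = v) : B ≤ v := by omega
lemma nat3_le3 (A B C v : ℕ) (h : A + B + C = v) : C ≤ v := by omega
lemma nat3_sub1 (A B C D n v : ℕ) (h : A + B + C = v) (hD : A = D + n) : D + B + C = v - n := by omega
lemma nat3_sub2 (A B C D n v : ℕ) (h : A + B + C = v) (hD : B = D + n) : A + D + C = v - n := by omega
lemma nat3_sub3 (A B C D n v : ℕ) (h : A + B + C = v) (hD : C = D + n) : A + B + D = v - n := by omega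
lemma nat_comb1 (W S Qn v E Cn : ℕ) (h5 : W = S + Qn) (h6 : W = v) (hr : E + Cn = S) :
    E + Cn + Qn = v := by omega
lemma nat_comb2 (W S Qn v E Cn : ℕ) (h5 : W = S + Qn) (h6 : W = v) (hr : S = E + Cn) :
    E + Qn + Cn = v := by omega
lemma nat_comb3 (W Pn S v Bn Dn : ℕ) (h5 : W = Pn + S) (h6 : W = v) (hr : S = Bn + Dn) :
    Pn + Bn + Dn = v := by omega

theorem herzog_algebra (K : Type*) [Field K] (n₁ n₂ n₃ : ℕ)
    (h1 : 0 < n₁) (h2 : 0 < n₂) (h3 : 0 < n₃)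
    (a b c d e f : ℕ)
    (ha : 0 < a) (hb : 0 < b) (hc : 0 < c) (hd : 0 < d) (he : 0 < e) (hf : 0 < f)
    (rel1 : (a + e) * n₁ = b * n₂ + d * n₃)
    (rel2 : a * n₁ + f * n₂ = (c + d) * n₃)
    (rel3 : (b + f) * n₂ = e * n₁ + c * n₃)
    (min1 : ∀ k α β : ℕ, 0 < k → k * n₁ = α * n₂ + β * n₃ → a + e ≤ k)
    (min2 : ∀ k α β : ℕ, 0 < k → k * n₂ = α * n₁ + β * n₃ → b + f ≤ k)
    (min3 : ∀ k α β : ℕ, 0 < k → k * n₃ = α * n₁ + β * n₂ → c + d ≤ k)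
    (φ : MvPolynomial (Fin 3) K →ₐ[K] Polynomial K)
    (hφ : φ = aeval ![Polynomial.X ^ n₁, Polynomial.X ^ n₂, Polynomial.X ^ n₃]) :
    RingHom.ker (φ : MvPolynomial (Fin 3) K →+* Polynomial K) =
      Ideal.span {X 0 ^ (a + e) - X 1 ^ b * X 2 ^ d,
                  X 0 ^ a * X 1 ^ f - X 2 ^ (c + d),
                  X 1 ^ (b + f) - X 0 ^ e * X 2 ^ c} := by
  subst hφ
  set J : Ideal (MvPolynomial (Fin 3) K) :=
    Ideal.span {X 0 ^ (a + e) - X 1 ^ b * X 2 ^ d,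
                X 0 ^ a * X 1 ^ f - X 2 ^ (c + d),
                X 1 ^ (b + f) - X 0 ^ e * X 2 ^ c} with hJ
  have hF1 : (X 0 ^ (a + e) - X 1 ^ b * X 2 ^ d : MvPolynomial (Fin 3) K) ∈ J :=
    Ideal.subset_span (by left; rfl)
  have hF2 : (X 0 ^ a * X 1 ^ f - X 2 ^ (c + d) : MvPolynomial (Fin 3) K) ∈ J :=
    Ideal.subset_span (by right; left; rfl)
  have hF3 : (X 1 ^ (b + f) - X 0 ^ e * X 2 ^ c : MvPolynomial (Fin 3) K) ∈ J :=
    Ideal.subset_span (by right; right; rfl)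
  -- the three minors vanish under the map
  have hφF1 : aeval ![(Polynomial.X : Polynomial K) ^ n₁, Polynomial.X ^ n₂, Polynomial.X ^ n₃]
      (X 0 ^ (a + e) - X 1 ^ b * X 2 ^ d : MvPolynomial (Fin 3) K) = 0 := by
    have k1 : (X 0 ^ (a + e) - X 1 ^ b * X 2 ^ d : MvPolynomial (Fin 3) K)
        = Mm K (a + e) 0 0 - Mm K 0 b d := by simp [Mm]
    rw [k1, map_sub, aeval_Mm, aeval_Mm,
      show (a + e) * n₁ + 0 * n₂ + 0 * n₃ = 0 * n₁ + b * n₂ + d * n₃ by simpa using rel1,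
      sub_self]
  have hφF2 : aeval ![(Polynomial.X : Polynomial K) ^ n₁, Polynomial.X ^ n₂, Polynomial.X ^ n₃]
      (X 0 ^ a * X 1 ^ f - X 2 ^ (c + d) : MvPolynomial (Fin 3) K) = 0 := by
    have k1 : (X 0 ^ a * X 1 ^ f - X 2 ^ (c + d) : MvPolynomial (Fin 3) K)
        = Mm K a f 0 - Mm K 0 0 (c + d) := by simp [Mm]
    rw [k1, map_sub, aeval_Mm, aeval_Mm,
      show a * n₁ + f * n₂ + 0 * n₃ = 0 * n₁ + 0 * n₂ + (c + d) * n₃ by simpa using rel2,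
      sub_self]
  have hφF3 : aeval ![(Polynomial.X : Polynomial K) ^ n₁, Polynomial.X ^ n₂, Polynomial.X ^ n₃]
      (X 1 ^ (b + f) - X 0 ^ e * X 2 ^ c : MvPolynomial (Fin 3) K) = 0 := by
    have k1 : (X 1 ^ (b + f) - X 0 ^ e * X 2 ^ c : MvPolynomial (Fin 3) K)
        = Mm K 0 (b + f) 0 - Mm K e 0 c := by simp [Mm]
    rw [k1, map_sub, aeval_Mm, aeval_Mm,
      show 0 * n₁ + (b + f) * n₂ + 0 * n₃ = e * n₁ + 0 * n₂ + c * n₃ by simpa using rel3,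
      sub_self]
  have hspan : J ≤ RingHom.ker (aeval ![(Polynomial.X : Polynomial K) ^ n₁, Polynomial.X ^ n₂,
      Polynomial.X ^ n₃] : MvPolynomial (Fin 3) K →ₐ[K] Polynomial K).toRingHom := by
    rw [hJ, Ideal.span_le]
    rintro g hg
    simp only [Set.mem_insert_iff, Set.mem_singleton_iff] at hg
    rcases hg with rfl | rfl | rfl
    · exact hφF1
    · exact hφF2
    · exact hφF3
  -- connectivity of monomials of equal degree modulo J
  have tri : ∀ A B C : MvPolynomial (Fin 3) K, A - B ∈ J → B - C ∈ J → A - C ∈ J := by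
    intro A B C hAB hBC
    have := Ideal.add_mem J hAB hBC
    rwa [sub_add_sub_cancel] at this
  have symJ : ∀ A B : MvPolynomial (Fin 3) K, A - B ∈ J → B - A ∈ J := by
    intro A B hAB
    have := neg_mem hAB
    rwa [neg_sub] at this
  have rule1 : ∀ P Q R : ℕ, (Mm K (P + (a + e)) Q R - Mm K P (Q + b) (R + d)) ∈ J := by
    intro P Q R
    have hid : Mm K (P + (a + e)) Q R - Mm K P (Q + b) (R + d)
        = Mm K P Q R * (X 0 ^ (a + e) - X 1 ^ b * X 2 ^ d) := by
      simp only [Mm]; ring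
    rw [hid]; exact Ideal.mul_mem_left _ _ hF1
  have rule2 : ∀ P Q R : ℕ, (Mm K (P + a) (Q + f) R - Mm K P Q (R + (c + d))) ∈ J := by
    intro P Q R
    have hid : Mm K (P + a) (Q + f) R - Mm K P Q (R + (c + d))
        = Mm K P Q R * (X 0 ^ a * X 1 ^ f - X 2 ^ (c + d)) := by
      simp only [Mm]; ring
    rw [hid]; exact Ideal.mul_mem_left _ _ hF2
  have rule3 : ∀ P Q R : ℕ, (Mm K P (Q + (b + f)) R - Mm K (P + e) Q (R + c)) ∈ J := by
    intro P Q R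
    have hid : Mm K P (Q + (b + f)) R - Mm K (P + e) Q (R + c)
        = Mm K P Q R * (X 1 ^ (b + f) - X 0 ^ e * X 2 ^ c) := by
      simp only [Mm]; ring
    rw [hid]; exact Ideal.mul_mem_left _ _ hF3
  have conn : ∀ v p q r p' q' r' : ℕ,
      p * n₁ + q * n₂ + r * n₃ = v → p' * n₁ + q' * n₂ + r' * n₃ = v →
      Mm K p q r - Mm K p' q' r' ∈ J := by
    intro v
    induction v using Nat.strong_induction_on with
    | _ v IH =>
      have strip0 : ∀ P Q R P' Q' R' : ℕ,
          (P + 1) * n₁ + Q * n₂ + R * n₃ = v → (P' + 1) * n₁ + Q' * n₂ + R' * n₃ = v →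
          Mm K (P + 1) Q R - Mm K (P' + 1) Q' R' ∈ J := by
        intro P Q R P' Q' R' hA hB
        have h1' : n₁ ≤ (P + 1) * n₁ := by
          have := Nat.mul_le_mul (show 1 ≤ P + 1 by omega) (le_refl n₁)
          simpa using this
        have hvge : n₁ ≤ v := le_trans h1' (nat3_le1 _ _ _ _ hA)
        have hlt : v - n₁ < v := by omega
        have hA' : P * n₁ + Q * n₂ + R * n₃ = v - n₁ :=
          nat3_sub1 _ _ _ _ _ _ hA (Nat.succ_mul P n₁)
        have hB' : P' * n₁ + Q' * n₂ + R' * n₃ = v - n₁ :=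
          nat3_sub1 _ _ _ _ _ _ hB (Nat.succ_mul P' n₁)
        have hmem := IH (v - n₁) hlt P Q R P' Q' R' hA' hB'
        have hid : Mm K (P + 1) Q R - Mm K (P' + 1) Q' R'
            = X 0 * (Mm K P Q R - Mm K P' Q' R') := by simp only [Mm]; ring
        rw [hid]; exact Ideal.mul_mem_left _ _ hmem
      have strip1 : ∀ P Q R P' Q' R' : ℕ,
          P * n₁ + (Q + 1) * n₂ + R * n₃ = v → P' * n₁ + (Q' + 1) * n₂ + R' * n₃ = v →
          Mm K P (Q + 1) R - Mm K P' (Q' + 1) R' ∈ J := by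
        intro P Q R P' Q' R' hA hB
        have h1' : n₂ ≤ (Q + 1) * n₂ := by
          have := Nat.mul_le_mul (show 1 ≤ Q + 1 by omega) (le_refl n₂)
          simpa using this
        have hvge : n₂ ≤ v := le_trans h1' (nat3_le2 _ _ _ _ hA)
        have hlt : v - n₂ < v := by omega
        have hA' : P * n₁ + Q * n₂ + R * n₃ = v - n₂ :=
          nat3_sub2 _ _ _ _ _ _ hA (Nat.succ_mul Q n₂)
        have hB' : P' * n₁ + Q' * n₂ + R' * n₃ = v - n₂ :=
          nat3_sub2 _ _ _ _ _ _ hB (Nat.succ_mul Q' n₂)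
        have hmem := IH (v - n₂) hlt P Q R P' Q' R' hA' hB'
        have hid : Mm K P (Q + 1) R - Mm K P' (Q' + 1) R'
            = X 1 * (Mm K P Q R - Mm K P' Q' R') := by simp only [Mm]; ring
        rw [hid]; exact Ideal.mul_mem_left _ _ hmem
      have strip2 : ∀ P Q R P' Q' R' : ℕ,
          P * n₁ + Q * n₂ + (R + 1) * n₃ = v → P' * n₁ + Q' * n₂ + (R' + 1) * n₃ = v →
          Mm K P Q (R + 1) - Mm K P' Q' (R' + 1) ∈ J := by
        intro P Q R P' Q' R' hA hB
        have h1' : n₃ ≤ (R + 1) * n₃ := by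
          have := Nat.mul_le_mul (show 1 ≤ R + 1 by omega) (le_refl n₃)
          simpa using this
        have hvge : n₃ ≤ v := le_trans h1' (nat3_le3 _ _ _ _ hA)
        have hlt : v - n₃ < v := by omega
        have hA' : P * n₁ + Q * n₂ + R * n₃ = v - n₃ :=
          nat3_sub3 _ _ _ _ _ _ hA (Nat.succ_mul R n₃)
        have hB' : P' * n₁ + Q' * n₂ + R' * n₃ = v - n₃ :=
          nat3_sub3 _ _ _ _ _ _ hB (Nat.succ_mul R' n₃)
        have hmem := IH (v - n₃) hlt P Q R P' Q' R' hA' hB'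
        have hid : Mm K P Q (R + 1) - Mm K P' Q' (R' + 1)
            = X 2 * (Mm K P Q R - Mm K P' Q' R') := by simp only [Mm]; ring
        rw [hid]; exact Ideal.mul_mem_left _ _ hmem
      intro p q r p' q' r' hp hp'
      by_cases hv0 : v = 0
      · subst hv0
        have hz1 : p = 0 ∧ q = 0 ∧ r = 0 := by
          obtain ⟨hA, hB⟩ := Nat.add_eq_zero.1 hp
          obtain ⟨hC, hD⟩ := Nat.add_eq_zero.1 hA
          refine ⟨?_, ?_, ?_⟩
          · rcases Nat.mul_eq_zero.1 hC with h' | h' <;> omega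
          · rcases Nat.mul_eq_zero.1 hD with h' | h' <;> omega
          · rcases Nat.mul_eq_zero.1 hB with h' | h' <;> omega
        have hz2 : p' = 0 ∧ q' = 0 ∧ r' = 0 := by
          obtain ⟨hA, hB⟩ := Nat.add_eq_zero.1 hp'
          obtain ⟨hC, hD⟩ := Nat.add_eq_zero.1 hA
          refine ⟨?_, ?_, ?_⟩
          · rcases Nat.mul_eq_zero.1 hC with h' | h' <;> omega
          · rcases Nat.mul_eq_zero.1 hD with h' | h' <;> omega
          · rcases Nat.mul_eq_zero.1 hB with h' | h' <;> omega
        rw [hz1.1, hz1.2.1, hz1.2.2, hz2.1, hz2.2.1, hz2.2.2, sub_self]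
        exact Ideal.zero_mem J
      · by_cases c0 : 0 < p ∧ 0 < p'
        · obtain ⟨P, rfl⟩ : ∃ P, p = P + 1 := ⟨p - 1, by omega⟩
          obtain ⟨P', rfl⟩ : ∃ P', p' = P' + 1 := ⟨p' - 1, by omega⟩
          exact strip0 P q r P' q' r' hp hp'
        · by_cases c1 : 0 < q ∧ 0 < q'
          · obtain ⟨Q, rfl⟩ : ∃ Q, q = Q + 1 := ⟨q - 1, by omega⟩
            obtain ⟨Q', rfl⟩ : ∃ Q', q' = Q' + 1 := ⟨q' - 1, by omega⟩
            exact strip1 p Q r p' Q' r' hp hp'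
          · by_cases c2 : 0 < r ∧ 0 < r'
            · obtain ⟨R, rfl⟩ : ∃ R, r = R + 1 := ⟨r - 1, by omega⟩
              obtain ⟨R', rfl⟩ : ∃ R', r' = R' + 1 := ⟨r' - 1, by omega⟩
              exact strip2 p q R p' q' R' hp hp'
            · -- disjoint supports
              have d0 : p = 0 ∨ p' = 0 := by omega
              have d1 : q = 0 ∨ q' = 0 := by omega
              have d2 : r = 0 ∨ r' = 0 := by omega
              -- main helper: p > 0, p' = 0
              have main : ∀ p q r q' r' : ℕ, p * n₁ + q * n₂ + r * n₃ = v →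
                  q' * n₂ + r' * n₃ = v → 0 < p → (q = 0 ∨ q' = 0) → (r = 0 ∨ r' = 0) →
                  Mm K p q r - Mm K 0 q' r' ∈ J := by
                intro p q r q' r' hp hp' hppos hd1 hd2
                rcases Nat.eq_zero_or_pos q' with hq'0 | hq'pos
                · rcases Nat.eq_zero_or_pos r' with hr'0 | hr'pos
                  · exfalso; apply hv0; rw [← hp', hq'0, hr'0]; ring
                  · -- q' = 0, r' > 0 : m' = (0,0,r')
                    have hr0 : r = 0 := hd2.resolve_right (by omega)
                    subst hr0 hq'0
                    -- r' * n₃ = p*n₁ + q*n₂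
                    have hval : r' * n₃ = p * n₁ + q * n₂ := by
                      have h6 : r' * n₃ = v := by simpa using hp'
                      rw [h6, ← hp]; ring
                    have hge : c + d ≤ r' := min3 r' p q hr'pos hval
                    obtain ⟨R, hR⟩ := Nat.le.dest hge  -- (c+d) + R = r'
                    -- rule2 at (0,0,R): Mm a f R - Mm 0 0 (R + (c+d)) ∈ J
                    have hrw : Mm K a f R - Mm K 0 0 r' ∈ J := by
                      have := rule2 0 0 R
                      simpa [show R + (c + d) = r' by omega] using this
                    -- share coordinate 0 : p > 0, a > 0
                    obtain ⟨P, rfl⟩ : ∃ P, p = P + 1 := ⟨p - 1, by omega⟩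
                    obtain ⟨A, hA⟩ : ∃ A, a = A + 1 := ⟨a - 1, by omega⟩
                    have hvalR : a * n₁ + f * n₂ + R * n₃ = v := by
                      have h5 : r' * n₃ = (c + d) * n₃ + R * n₃ := by
                        rw [← hR]; ring
                      have h6 : r' * n₃ = v := by simpa using hp'
                      exact nat_comb1 _ _ _ _ _ _ h5 h6 rel2
                    have hstep : Mm K (P + 1) q 0 - Mm K a f R ∈ J := by
                      rw [hA]
                      apply strip0 P q 0 A f R
                      · simpa using hp
                      · rw [← hA]; exact hvalR
                    exact tri _ _ _ hstep hrw
                · -- q' > 0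
                  have hq0 : q = 0 := hd1.resolve_right (by omega)
                  subst hq0
                  rcases Nat.eq_zero_or_pos r' with hr'0 | hr'pos
                  · -- m' = (0, q', 0), m = (p, 0, r)
                    subst hr'0
                    have hval : q' * n₂ = p * n₁ + r * n₃ := by
                      have h6 : q' * n₂ = v := by simpa using hp'
                      rw [h6, ← hp]; ring
                    have hge : b + f ≤ q' := min2 q' p r hq'pos hval
                    obtain ⟨Q, hQ⟩ := Nat.le.dest hge  -- (b+f) + Q = q'
                    have hrw : Mm K 0 q' 0 - Mm K e Q c ∈ J := by
                      have := rule3 0 Q 0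
                      simpa [show Q + (b + f) = q' by omega] using this
                    obtain ⟨P, rfl⟩ : ∃ P, p = P + 1 := ⟨p - 1, by omega⟩
                    obtain ⟨E, hE⟩ : ∃ E, e = E + 1 := ⟨e - 1, by omega⟩
                    have hvalQ : e * n₁ + Q * n₂ + c * n₃ = v := by
                      have h5 : q' * n₂ = (b + f) * n₂ + Q * n₂ := by
                        rw [← hQ]; ring
                      have h6 : q' * n₂ = v := by simpa using hp'
                      exact nat_comb2 _ _ _ _ _ _ h5 h6 rel3
                    have hstep : Mm K (P + 1) 0 r - Mm K e Q c ∈ J := by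
                      rw [hE]
                      apply strip0 P 0 r E Q c
                      · simpa using hp
                      · rw [← hE]; exact hvalQ
                    exact tri _ _ _ hstep (symJ _ _ hrw)
                  · -- q' > 0, r' > 0 : m = (p, 0, 0)
                    have hr0 : r = 0 := hd2.resolve_right (by omega)
                    subst hr0
                    have hval : p * n₁ = q' * n₂ + r' * n₃ := by
                      have h5 : p * n₁ = v := by simpa using hp
                      rw [h5, ← hp']
                    have hge : a + e ≤ p := min1 p q' r' hppos hval
                    obtain ⟨P, hP⟩ := Nat.le.dest hge  -- (a+e) + P = p
                    have hrw : Mm K p 0 0 - Mm K P b d ∈ J := by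
                      have := rule1 P 0 0
                      simpa [show P + (a + e) = p by omega] using this
                    obtain ⟨B, hB⟩ : ∃ B, b = B + 1 := ⟨b - 1, by omega⟩
                    obtain ⟨Q', rfl⟩ : ∃ Q', q' = Q' + 1 := ⟨q' - 1, by omega⟩
                    have hvalP : P * n₁ + b * n₂ + d * n₃ = v := by
                      have h5 : p * n₁ = P * n₁ + (a + e) * n₁ := by
                        rw [← hP]; ring
                      have h6 : p * n₁ = v := by simpa using hp
                      exact nat_comb3 _ _ _ _ _ _ h5 h6 rel1
                    have hstep : Mm K P b d - Mm K 0 (Q' + 1) r' ∈ J := by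
                      rw [hB]
                      apply strip1 P B d 0 Q' r'
                      · rw [← hB]; exact hvalP
                      · simpa using hp'
                    exact tri _ _ _ hrw hstep
              rcases d0 with hp0 | hp'0
              · rcases Nat.eq_zero_or_pos p' with hp'0 | hp'pos
                · -- p = 0, p' = 0
                  subst hp0; subst hp'0
                  rcases Nat.eq_zero_or_pos q with hq0 | hqpos
                  · subst hq0
                    rcases Nat.eq_zero_or_pos q' with hq'0 | hq'pos
                    · -- m = (0,0,r), m' = (0,0,r')
                      subst hq'0
                      have : r = r' := by
                        have hval : r * n₃ = r' * n₃ := by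
                          have hA : r * n₃ = v := by simpa using hp
                          have hB : r' * n₃ = v := by simpa using hp'
                          rw [hA]; exact hB.symm
                        exact Nat.eq_of_mul_eq_mul_right h3 hval
                      rw [this, sub_self]; exact Ideal.zero_mem J
                    · -- m = (0,0,r), m' = (0,q',r'), q' > 0 ⇒ r = 0 ∨ r' = 0
                      have hrpos : 0 < r := by
                        rcases Nat.eq_zero_or_pos r with h' | h'
                        · exfalso; apply hv0; rw [← hp, h']; simp
                        · exact h'
                      have hr'0 : r' = 0 := by rcases d2 with h' | h' <;> omega
                      subst hr'0
                      -- q' * n₂ = r * n₃, both positive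
                      apply symJ
                      have hval : q' * n₂ = 0 * n₁ + r * n₃ := by
                        have hA : q' * n₂ = v := by simpa using hp'
                        have hB : r * n₃ = v := by simpa using hp
                        rw [zero_mul, zero_add, hA]; exact hB.symm
                      have hge : b + f ≤ q' := min2 q' 0 r hq'pos hval
                      obtain ⟨Q, hQ⟩ := Nat.le.dest hge
                      have hrw : Mm K 0 q' 0 - Mm K e Q c ∈ J := by
                        have := rule3 0 Q 0
                        simpa [show Q + (b + f) = q' by omega] using this
                      obtain ⟨CC, hCC⟩ : ∃ CC, c = CC + 1 := ⟨c - 1, by omega⟩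
                      obtain ⟨R, rfl⟩ : ∃ R, r = R + 1 := ⟨r - 1, by omega⟩
                      have hvalQ : e * n₁ + Q * n₂ + c * n₃ = v := by
                        have h5 : q' * n₂ = (b + f) * n₂ + Q * n₂ := by rw [← hQ]; ring
                        have h6 : q' * n₂ = v := by simpa using hp'
                        exact nat_comb2 _ _ _ _ _ _ h5 h6 rel3
                      have hstep : Mm K e Q c - Mm K 0 0 (R + 1) ∈ J := by
                        rw [hCC]
                        apply strip2 e Q CC 0 0 R
                        · rw [← hCC]; exact hvalQ
                        · simpa using hp
                      exact tri _ _ _ hrw hstep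
                  · -- q > 0 ⇒ q' = 0
                    have hq'0 : q' = 0 := by rcases d1 with h' | h' <;> omega
                    subst hq'0
                    have hr'pos : 0 < r' := by
                      rcases Nat.eq_zero_or_pos r' with h' | h'
                      · exfalso; apply hv0; rw [← hp', h']; simp
                      · exact h'
                    have hr0 : r = 0 := by rcases d2 with h' | h' <;> omega
                    subst hr0
                    -- m = (0,q,0), m' = (0,0,r')
                    have hval : q * n₂ = 0 * n₁ + r' * n₃ := by
                      have hA : q * n₂ = v := by simpa using hp
                      have hB : r' * n₃ = v := by simpa using hp'
                      rw [zero_mul, zero_add, hA]; exact hB.symm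
                    have hge : b + f ≤ q := min2 q 0 r' hqpos hval
                    obtain ⟨Q, hQ⟩ := Nat.le.dest hge
                    have hrw : Mm K 0 q 0 - Mm K e Q c ∈ J := by
                      have := rule3 0 Q 0
                      simpa [show Q + (b + f) = q by omega] using this
                    obtain ⟨CC, hCC⟩ : ∃ CC, c = CC + 1 := ⟨c - 1, by omega⟩
                    obtain ⟨R', rfl⟩ : ∃ R', r' = R' + 1 := ⟨r' - 1, by omega⟩
                    have hvalQ : e * n₁ + Q * n₂ + c * n₃ = v := by
                      have h5 : q * n₂ = (b + f) * n₂ + Q * n₂ := by rw [← hQ]; ring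
                      have h6 : q * n₂ = v := by simpa using hp
                      exact nat_comb2 _ _ _ _ _ _ h5 h6 rel3
                    have hstep : Mm K e Q c - Mm K 0 0 (R' + 1) ∈ J := by
                      rw [hCC]
                      apply strip2 e Q CC 0 0 R'
                      · rw [← hCC]; exact hvalQ
                      · simpa using hp'
                    exact tri _ _ _ hrw hstep
                · -- p = 0, p' > 0 : symmetric via main
                  subst hp0
                  apply symJ
                  exact main p' q' r' q r hp' (by simpa using hp) hp'pos
                    (by omega) (by omega)
              · -- p' = 0 (and if p = 0 handled above—here p may be 0 too, but main needs p > 0)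
                rcases Nat.eq_zero_or_pos p with hp0 | hppos
                · -- both zero: same as previous sub-branch; reuse by symmetry trick
                  subst hp0
                  subst hp'0
                  rcases Nat.eq_zero_or_pos q with hq0 | hqpos
                  · subst hq0
                    rcases Nat.eq_zero_or_pos q' with hq'0 | hq'pos
                    · subst hq'0
                      have : r = r' := by
                        have hval : r * n₃ = r' * n₃ := by
                          have hA : r * n₃ = v := by simpa using hp
                          have hB : r' * n₃ = v := by simpa using hp'
                          rw [hA]; exact hB.symm
                        exact Nat.eq_of_mul_eq_mul_right h3 hval
                      rw [this, sub_self]; exact Ideal.zero_mem J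
                    · have hrpos : 0 < r := by
                        rcases Nat.eq_zero_or_pos r with h' | h'
                        · exfalso; apply hv0; rw [← hp, h']; simp
                        · exact h'
                      have hr'0 : r' = 0 := by rcases d2 with h' | h' <;> omega
                      subst hr'0
                      apply symJ
                      have hval : q' * n₂ = 0 * n₁ + r * n₃ := by
                        have hA : q' * n₂ = v := by simpa using hp'
                        have hB : r * n₃ = v := by simpa using hp
                        rw [zero_mul, zero_add, hA]; exact hB.symm
                      have hge : b + f ≤ q' := min2 q' 0 r hq'pos hval
                      obtain ⟨Q, hQ⟩ := Nat.le.dest hge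
                      have hrw : Mm K 0 q' 0 - Mm K e Q c ∈ J := by
                        have := rule3 0 Q 0
                        simpa [show Q + (b + f) = q' by omega] using this
                      obtain ⟨CC, hCC⟩ : ∃ CC, c = CC + 1 := ⟨c - 1, by omega⟩
                      obtain ⟨R, rfl⟩ : ∃ R, r = R + 1 := ⟨r - 1, by omega⟩
                      have hvalQ : e * n₁ + Q * n₂ + c * n₃ = v := by
                        have h5 : q' * n₂ = (b + f) * n₂ + Q * n₂ := by rw [← hQ]; ring
                        have h6 : q' * n₂ = v := by simpa using hp'
                        exact nat_comb2 _ _ _ _ _ _ h5 h6 rel3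
                      have hstep : Mm K e Q c - Mm K 0 0 (R + 1) ∈ J := by
                        rw [hCC]
                        apply strip2 e Q CC 0 0 R
                        · rw [← hCC]; exact hvalQ
                        · simpa using hp
                      exact tri _ _ _ hrw hstep
                  · have hq'0 : q' = 0 := by rcases d1 with h' | h' <;> omega
                    subst hq'0
                    have hr'pos : 0 < r' := by
                      rcases Nat.eq_zero_or_pos r' with h' | h'
                      · exfalso; apply hv0; rw [← hp', h']; simp
                      · exact h'
                    have hr0 : r = 0 := by rcases d2 with h' | h' <;> omega
                    subst hr0
                    have hval : q * n₂ = 0 * n₁ + r' * n₃ := by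
                      have hA : q * n₂ = v := by simpa using hp
                      have hB : r' * n₃ = v := by simpa using hp'
                      rw [zero_mul, zero_add, hA]; exact hB.symm
                    have hge : b + f ≤ q := min2 q 0 r' hqpos hval
                    obtain ⟨Q, hQ⟩ := Nat.le.dest hge
                    have hrw : Mm K 0 q 0 - Mm K e Q c ∈ J := by
                      have := rule3 0 Q 0
                      simpa [show Q + (b + f) = q by omega] using this
                    obtain ⟨CC, hCC⟩ : ∃ CC, c = CC + 1 := ⟨c - 1, by omega⟩
                    obtain ⟨R', rfl⟩ : ∃ R', r' = R' + 1 := ⟨r' - 1, by omega⟩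
                    have hvalQ : e * n₁ + Q * n₂ + c * n₃ = v := by
                      have h5 : q * n₂ = (b + f) * n₂ + Q * n₂ := by rw [← hQ]; ring
                      have h6 : q * n₂ = v := by simpa using hp
                      exact nat_comb2 _ _ _ _ _ _ h5 h6 rel3
                    have hstep : Mm K e Q c - Mm K 0 0 (R' + 1) ∈ J := by
                      rw [hCC]
                      apply strip2 e Q CC 0 0 R'
                      · rw [← hCC]; exact hvalQ
                      · simpa using hp'
                    exact tri _ _ _ hrw hstep
                · -- p > 0, p' = 0
                  subst hp'0
                  exact main p q r q' r' hp (by simpa using hp') hppos d1 d2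
  -- every polynomial in the kernel lies in J
  have hker_sub : ∀ F : MvPolynomial (Fin 3) K,
      aeval ![(Polynomial.X : Polynomial K) ^ n₁, Polynomial.X ^ n₂, Polynomial.X ^ n₃] F = 0 →
      F ∈ J := by
    suffices H : ∀ (N : ℕ) (F : MvPolynomial (Fin 3) K), F.support.card ≤ N →
        aeval ![(Polynomial.X : Polynomial K) ^ n₁, Polynomial.X ^ n₂, Polynomial.X ^ n₃] F = 0 →
        F ∈ J by
      intro F hF
      exact H F.support.card F le_rfl hF
    intro N
    induction N with
    | zero =>
      intro F hcard _
      have h0 : F.support = ∅ := Finset.card_eq_zero.1 (Nat.le_zero.1 hcard)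
      have hF0 : F = 0 := support_eq_empty.1 h0
      rw [hF0]; exact Ideal.zero_mem J
    | succ N IHN =>
      intro F hcard hF
      rcases eq_or_ne F 0 with rfl | hF0
      · exact Ideal.zero_mem J
      · classical
        have hne : F.support.Nonempty := support_nonempty.2 hF0
        obtain ⟨m₀, hm₀⟩ := hne
        set val : (Fin 3 →₀ ℕ) → ℕ := fun m => m 0 * n₁ + m 1 * n₂ + m 2 * n₃ with hvaldef
        set v := val m₀ with hvdef
        set T := F.support.filter (fun m => val m = v) with hTdef
        have hm₀T : m₀ ∈ T := Finset.mem_filter.2 ⟨hm₀, rfl⟩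
        have hφF : aeval ![(Polynomial.X : Polynomial K) ^ n₁, Polynomial.X ^ n₂,
            Polynomial.X ^ n₃] F
            = ∑ m ∈ F.support, Polynomial.C (coeff m F) * Polynomial.X ^ (val m) := by
          conv_lhs => rw [F.as_sum]
          rw [map_sum]
          refine Finset.sum_congr rfl fun m _ => ?_
          rw [monomial_eq_Mm, map_mul, aeval_Mm, aeval_C, Polynomial.algebraMap_eq]
        have hsum : ∑ m ∈ T, coeff m F = 0 := by
          have h0 : Polynomial.coeff (∑ m ∈ F.support,
              Polynomial.C (coeff m F) * Polynomial.X ^ (val m)) v = 0 := by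
            rw [← hφF, hF, Polynomial.coeff_zero]
          rw [Polynomial.finset_sum_coeff] at h0
          simp only [Polynomial.coeff_C_mul, Polynomial.coeff_X_pow, mul_ite, mul_one,
            mul_zero] at h0
          calc ∑ m ∈ T, coeff m F
              = ∑ m ∈ F.support, if v = val m then coeff m F else 0 := by
                rw [hTdef, Finset.sum_filter]
                refine Finset.sum_congr rfl fun m _ => ?_
                by_cases h : val m = v
                · simp [h]
                · simp [h, Ne.symm h]
            _ = 0 := h0
        set G := ∑ m ∈ T, monomial m (coeff m F) with hGdef
        have hGJ : G ∈ J := by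
          have hG2 : G = ∑ m ∈ T, (coeff m F) • ((monomial m (1 : K)) - monomial m₀ 1) := by
            rw [hGdef]
            symm
            calc ∑ m ∈ T, (coeff m F) • ((monomial m (1 : K)) - monomial m₀ 1)
                = (∑ m ∈ T, monomial m (coeff m F))
                    - (∑ m ∈ T, coeff m F) • (monomial m₀ (1 : K)) := by
                  rw [Finset.sum_smul, ← Finset.sum_sub_distrib]
                  refine Finset.sum_congr rfl fun m _ => ?_
                  rw [smul_sub, smul_monomial, smul_eq_mul, mul_one]
              _ = ∑ m ∈ T, monomial m (coeff m F) := by rw [hsum, zero_smul, sub_zero]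
          rw [hG2]
          refine Submodule.sum_mem J fun m hm => ?_
          rw [MvPolynomial.smul_eq_C_mul]
          refine Ideal.mul_mem_left _ _ ?_
          rw [monomial_eq_Mm, monomial_eq_Mm, map_one, one_mul, one_mul]
          have hmval : val m = v := (Finset.mem_filter.1 hm).2
          exact conn v (m 0) (m 1) (m 2) (m₀ 0) (m₀ 1) (m₀ 2) hmval rfl
        have hGcoeff : ∀ m, coeff m G = if m ∈ T then coeff m F else 0 := by
          intro m
          rw [hGdef, MvPolynomial.coeff_sum]
          simp only [MvPolynomial.coeff_monomial]
          exact Finset.sum_ite_eq' T m (fun m' => coeff m' F)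
        have hsupp : (F - G).support ⊆ F.support \ T := by
          intro m hm
          have hne2 : coeff m (F - G) ≠ 0 := mem_support_iff.1 hm
          rw [MvPolynomial.coeff_sub, hGcoeff] at hne2
          rw [Finset.mem_sdiff]
          by_cases hT : m ∈ T
          · simp [hT] at hne2
          · refine ⟨?_, hT⟩
            rw [mem_support_iff]
            simpa [hT] using hne2
        have hcard2 : (F - G).support.card ≤ N := by
          have hlt : (F.support \ T).card < F.support.card := by
            apply Finset.card_lt_card
            constructor
            · exact Finset.sdiff_subset
            · intro hsub
              have h' := hsub hm₀
              rw [Finset.mem_sdiff] at h'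
              exact h'.2 hm₀T
          have hle := Finset.card_le_card hsupp
          omega
        have hG0 : aeval ![(Polynomial.X : Polynomial K) ^ n₁, Polynomial.X ^ n₂,
            Polynomial.X ^ n₃] G = 0 := by
          have hmem := hspan hGJ
          rwa [RingHom.mem_ker] at hmem
        have hφFG : aeval ![(Polynomial.X : Polynomial K) ^ n₁, Polynomial.X ^ n₂,
            Polynomial.X ^ n₃] (F - G) = 0 := by
          rw [map_sub, hF, hG0, sub_zero]
        have hFG := IHN (F - G) hcard2 hφFG
        have hFdecomp : F = (F - G) + G := by ring
        rw [hFdecomp]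
        exact Ideal.add_mem J hFG hGJ
  refine le_antisymm (fun F hF => hker_sub F ?_) hspan
  rwa [RingHom.mem_ker] at hF


end Stmt7Aux

open MvPolynomial in
/-- for `S = ⟨n₁,n₂,n₃⟩` minimally generated and not symmetric,
the toric ideal `I_S = ker (K[X,Y,Z] → K[t])` is generated by the maximal
minors of a matrix `((X^a, Y^b, Z^c), (Z^d, X^e, Y^f))` with positive
exponents. -/
theorem stmt7 (K : Type*) [Field K] (n₁ n₂ n₃ : ℕ)
    (h1 : 0 < n₁) (h12 : n₁ < n₂) (h23 : n₂ < n₃)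
    (hgcd : Nat.gcd n₁ (Nat.gcd n₂ n₃) = 1)
    (hmin1 : n₁ ∉ AddSubmonoid.closure {n₂, n₃})
    (hmin2 : n₂ ∉ AddSubmonoid.closure {n₁, n₃})
    (hmin3 : n₃ ∉ AddSubmonoid.closure {n₁, n₂})
    (S : AddSubmonoid ℕ) (hS : S = AddSubmonoid.closure {n₁, n₂, n₃})
    (hnotsym : ¬ ∀ x : ℤ, ¬ S.zmem x ↔ S.zmem (frobeniusNumber S - x))
    (φ : MvPolynomial (Fin 3) K →ₐ[K] Polynomial K)
    (hφ : φ = aeval ![Polynomial.X ^ n₁, Polynomial.X ^ n₂, Polynomial.X ^ n₃]) :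
    ∃ a b c d e f : ℕ, 0 < a ∧ 0 < b ∧ 0 < c ∧ 0 < d ∧ 0 < e ∧ 0 < f ∧
      RingHom.ker (φ : MvPolynomial (Fin 3) K →+* Polynomial K) =
        Ideal.span {X 0 ^ (a + e) - X 1 ^ b * X 2 ^ d,
                    X 0 ^ a * X 1 ^ f - X 2 ^ (c + d),
                    X 1 ^ (b + f) - X 0 ^ e * X 2 ^ c} := by
  have h2 : 0 < n₂ := lt_trans h1 h12
  have h3 : 0 < n₃ := lt_trans h2 h23
  obtain ⟨a, b, c, d, e, f, ha, hb, hc, hd, he, hf, rel1, rel2, rel3, min1, min2, min3⟩ :=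
    Stmt7Aux.herzog_numeric n₁ n₂ n₃ h1 h2 h3 hgcd S hS hnotsym
  exact ⟨a, b, c, d, e, f, ha, hb, hc, hd, he, hf,
    Stmt7Aux.herzog_algebra K n₁ n₂ n₃ h1 h2 h3 a b c d e f ha hb hc hd he hf
      rel1 rel2 rel3 min1 min2 min3 φ hφ⟩
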